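/- arXiv:1606.09097 — 4 statements merged into one kernel-verified Lean document; each statement's English description precedes it below -/
import Mathlib

section
/- Let H be a group with a finite generating set S, let G be a finite-index normal subgroup of H, and let T be a finite generating set of G. Then there exists a constant C > 0 such that for every finite-index normal subgroup N of H, diam_T(G/(N∩G)) ≤ C·diam_S(H/N). -/
/-- The word length of `h` with respect to the (symmetrized) generating set `S`. -/
noncomputable def wordLength {H : Type*} [Group H] (S : Set H) (h : H) : ℕ :=
  sInf {ℓ : ℕ | ∃ w : List H, (∀ g ∈ w, g ∈ S ∪ S⁻¹) ∧ w.prod = h ∧ w.length = ℓ}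

/-- The diameter of `H/N` in the word metric induced by the generating set `S` of `H`:
the supremum over cosets `hN` of the minimal word length of a representative. -/
noncomputable def quotDiam {H : Type*} [Group H] (S : Set H) (N : Subgroup H) : ℕ :=
  sSup (Set.range fun h : H => sInf {ℓ : ℕ | ∃ n ∈ N, wordLength S (h * n) = ℓ})

section aux
variable {H : Type*} [Group H] {S : Set H}

lemma wordLength_le {h : H} {w : List H} (hw : ∀ g ∈ w, g ∈ S ∪ S⁻¹) (hp : w.prod = h) :
    wordLength S h ≤ w.length :=
  Nat.sInf_le ⟨w, hw, hp, rfl⟩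

lemma exists_word (hS : Subgroup.closure S = ⊤) (h : H) :
    ∃ w : List H, (∀ g ∈ w, g ∈ S ∪ S⁻¹) ∧ w.prod = h ∧ w.length = wordLength S h := by
  have hmem : h ∈ Submonoid.closure (S ∪ S⁻¹) := by
    have h1 : h ∈ (Subgroup.closure S).toSubmonoid := by rw [hS]; trivial
    rwa [Subgroup.closure_toSubmonoid] at h1
  obtain ⟨l, hl, hlp⟩ := Submonoid.exists_list_of_mem_closure hmem
  have hne : {ℓ : ℕ | ∃ w : List H, (∀ g ∈ w, g ∈ S ∪ S⁻¹) ∧ w.prod = h ∧ w.length = ℓ}.Nonempty :=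
    ⟨l.length, l, hl, hlp, rfl⟩
  obtain ⟨w, hw, hwp, hwl⟩ := Nat.sInf_mem hne
  exact ⟨w, hw, hwp, hwl⟩

lemma wordLength_one : wordLength S (1 : H) = 0 :=
  Nat.le_zero.mp (by simpa using wordLength_le (S := S) (w := []) (by simp) rfl)

lemma wordLength_single {s : H} (hs : s ∈ S ∪ S⁻¹) : wordLength S s ≤ 1 := by
  simpa using wordLength_le (w := [s]) (by simpa using hs) (by simp)

lemma wordLength_mul_le (hS : Subgroup.closure S = ⊤) (a b : H) :
    wordLength S (a * b) ≤ wordLength S a + wordLength S b := by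
  obtain ⟨wa, ha, hap, hal⟩ := exists_word hS a
  obtain ⟨wb, hb, hbp, hbl⟩ := exists_word hS b
  have := wordLength_le (S := S) (h := a * b) (w := wa ++ wb)
    (fun g hg => (List.mem_append.mp hg).elim (ha g) (hb g)) (by simp [hap, hbp])
  simpa [hal, hbl] using this

lemma wordLength_inv_le (hS : Subgroup.closure S = ⊤) (a : H) :
    wordLength S a⁻¹ ≤ wordLength S a := by
  obtain ⟨w, hw, hp, hl⟩ := exists_word hS a
  have := wordLength_le (S := S) (w := (w.map fun x => x⁻¹).reverse)
    (fun g hg => by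
      simp only [List.mem_reverse, List.mem_map] at hg
      obtain ⟨s, hs, rfl⟩ := hg
      rcases hw s hs with h | h
      · exact Or.inr (by simpa using h)
      · exact Or.inl (by simpa using h))
    (by rw [← List.prod_inv_reverse, hp])
  simpa [hl] using this

lemma eq_one_of_wordLength_eq_zero (hS : Subgroup.closure S = ⊤) {h : H}
    (h0 : wordLength S h = 0) : h = 1 := by
  obtain ⟨w, _, hp, hl⟩ := exists_word hS h
  rw [h0, List.length_eq_zero_iff] at hl
  rw [← hp, hl, List.prod_nil]

lemma schreier {N : Subgroup H} [N.Normal] (σ : H ⧸ N → H)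
    (hσ : ∀ q, (QuotientGroup.mk (σ q) : H ⧸ N) = q) :
    ∀ (w : List H) (z : H), z ∈ Set.range σ →
      ∃ l : List H,
        (∀ b ∈ l, ∃ z' s, z' ∈ Set.range σ ∧ s ∈ w ∧
            b = z' * s * (σ (QuotientGroup.mk (z' * s)))⁻¹) ∧
        l.prod * σ (QuotientGroup.mk (z * w.prod)) = z * w.prod ∧
        l.length = w.length := by
  intro w
  induction w with
  | nil =>
      rintro z ⟨q, rfl⟩
      refine ⟨[], by simp, ?_, rfl⟩
      simp [hσ q]
  | cons s w ih =>
      intro z hz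
      obtain ⟨l, hl, hlp, hll⟩ := ih (σ (QuotientGroup.mk (z * s))) ⟨_, rfl⟩
      refine ⟨(z * s * (σ (QuotientGroup.mk (z * s)))⁻¹) :: l, ?_, ?_, by simp [hll]⟩
      · intro b hb
        rcases List.mem_cons.mp hb with rfl | hb
        · exact ⟨z, s, hz, List.mem_cons_self .., rfl⟩
        · obtain ⟨z', s', h1, h2, h3⟩ := hl b hb
          exact ⟨z', s', h1, List.mem_cons_of_mem _ h2, h3⟩
      · have hq : (QuotientGroup.mk (σ (QuotientGroup.mk (z * s)) * w.prod) : H ⧸ N)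
            = QuotientGroup.mk (z * (s * w.prod)) := by
          rw [QuotientGroup.mk_mul, QuotientGroup.mk_mul, hσ,
            QuotientGroup.mk_mul, QuotientGroup.mk_mul, mul_assoc]
        rw [hq] at hlp
        rw [List.prod_cons, List.prod_cons]
        rw [mul_assoc (z * s * (σ (QuotientGroup.mk (z * s)))⁻¹), hlp]
        group

lemma shorten {F : Type*} [Group F] [Finite F] (X : Set F) :
    ∀ (n : ℕ) (l : List F), l.length ≤ n → (∀ y ∈ l, y ∈ X) →
      ∃ l' : List F, (∀ y ∈ l', y ∈ X) ∧ l'.prod = l.prod ∧ l'.length ≤ Nat.card F := by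
  intro n
  induction n with
  | zero =>
      intro l hl hX
      exact ⟨l, hX, rfl, le_trans hl (Nat.zero_le _)⟩
  | succ n ih =>
      intro l hl hX
      by_cases hc : l.length ≤ Nat.card F
      · exact ⟨l, hX, rfl, hc⟩
      push_neg at hc
      have key : ∀ i j : Fin (l.length + 1), (i : ℕ) < j →
          (l.take i).prod = (l.take j).prod →
          ∃ l' : List F, (∀ y ∈ l', y ∈ X) ∧ l'.prod = l.prod ∧ l'.length ≤ Nat.card F := by
        intro i j hij hprod
        set l₂ : List F := l.take i ++ l.drop j with hl₂
        have hmem : ∀ y ∈ l₂, y ∈ X := by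
          intro y hy
          rcases List.mem_append.mp hy with h | h
          · exact hX y (List.mem_of_mem_take h)
          · exact hX y (List.mem_of_mem_drop h)
        have hi2 : (i : ℕ) ≤ l.length := Nat.lt_succ_iff.mp i.isLt
        have hlen : l₂.length ≤ n := by
          have : l₂.length = (i : ℕ) + (l.length - j) := by
            simp [hl₂, List.length_take, List.length_drop, Nat.min_eq_left hi2]
          omega
        have hprod2 : l₂.prod = l.prod := by
          conv_rhs => rw [← List.take_append_drop (j : ℕ) l]
          rw [hl₂, List.prod_append, List.prod_append, hprod]
        obtain ⟨l', h1, h2, h3⟩ := ih l₂ hlen hmem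
        exact ⟨l', h1, h2.trans hprod2, h3⟩
      have hninj : ¬ Function.Injective (fun i : Fin (l.length + 1) => (l.take i).prod) := by
        intro hinj
        have hcard := Nat.card_le_card_of_injective _ hinj
        simp only [Nat.card_eq_fintype_card, Fintype.card_fin] at hcard
        omega
      obtain ⟨i, j, hfij, hij⟩ := Function.not_injective_iff.mp hninj
      rcases hij.lt_or_gt with h | h
      · exact key i j h hfij
      · exact key j i h hfij.symm

end aux

section spec
variable {H : Type*} [Group H] {S : Set H}

lemma quotDiam_spec (hS : Subgroup.closure S = ⊤) (N : Subgroup H) [N.FiniteIndex] (h : H) :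
    ∃ n ∈ N, wordLength S (h * n) ≤ quotDiam S N := by
  haveI hfinq : Finite (H ⧸ N) := by
    refine (Nat.card_ne_zero.mp ?_).2
    rw [← Subgroup.index_eq_card]
    exact Subgroup.FiniteIndex.index_ne_zero
  unfold quotDiam
  set v : H → ℕ := fun h => sInf {ℓ : ℕ | ∃ n ∈ N, wordLength S (h * n) = ℓ} with hv
  have hne : ∀ a : H, {ℓ : ℕ | ∃ n ∈ N, wordLength S (a * n) = ℓ}.Nonempty :=
    fun a => ⟨wordLength S (a * 1), 1, N.one_mem, rfl⟩
  obtain ⟨n, hn, hwl⟩ := Nat.sInf_mem (hne h)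
  refine ⟨n, hn, ?_⟩
  have hwl' : wordLength S (h * n) = v h := hwl
  rw [hwl']
  have hset : ∀ a b : H, a⁻¹ * b ∈ N →
      {ℓ : ℕ | ∃ n ∈ N, wordLength S (a * n) = ℓ} ⊆
        {ℓ : ℕ | ∃ n ∈ N, wordLength S (b * n) = ℓ} := by
    rintro a b hab ℓ ⟨x, hx, hwx⟩
    refine ⟨b⁻¹ * a * x, N.mul_mem (by simpa [mul_inv_rev] using N.inv_mem hab) hx, ?_⟩
    rw [← hwx]; congr 1; group
  have hinvt : ∀ a b : H, a⁻¹ * b ∈ N → v a = v b := by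
    intro a b hab
    exact congrArg sInf (Set.Subset.antisymm (hset a b hab)
      (hset b a (by simpa [mul_inv_rev] using N.inv_mem hab)))
  have hbdd : BddAbove (Set.range v) := by
    have hsub : Set.range v ⊆ v '' (Set.range (Quotient.out : H ⧸ N → H)) := by
      rintro x ⟨a, rfl⟩
      refine ⟨(QuotientGroup.mk a : H ⧸ N).out, ⟨_, rfl⟩, ?_⟩
      refine hinvt _ _ (QuotientGroup.eq.mp ?_)
      exact QuotientGroup.out_eq' _
    exact (((Set.finite_range _).image v)).bddAbove.mono hsub
  exact le_csSup hbdd ⟨h, rfl⟩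

end spec


/-- Let `H` be a group with a finite generating set `S`, let `G` be a
finite-index normal subgroup of `H`, and let `T` be a finite generating set of `G`.
Then there is a constant `C > 0` such that for every finite-index normal subgroup `N`
of `H`, `diam_T(G/(N∩G)) ≤ C · diam_S(H/N)`. -/
theorem stmt8 {H : Type*} [Group H] (S : Set H) (hSfin : S.Finite)
    (hSgen : Subgroup.closure S = ⊤)
    (G : Subgroup H) (hGnorm : G.Normal) (hGfin : G.FiniteIndex)
    (T : Set G) (hTfin : T.Finite) (hTgen : Subgroup.closure T = ⊤) :
    ∃ C : ℝ, 0 < C ∧ ∀ N : Subgroup H, N.Normal → N.FiniteIndex →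
      (quotDiam T (N.subgroupOf G) : ℝ) ≤ C * (quotDiam S N : ℝ) := by
  classical
  haveI := hGnorm
  haveI := hGfin
  haveI hGqfin : Finite (H ⧸ G) := by
    refine (Nat.card_ne_zero.mp ?_).2
    rw [← Subgroup.index_eq_card]
    exact Subgroup.FiniteIndex.index_ne_zero
  set m : ℕ := Nat.card (H ⧸ G) with hm
  set σG : H ⧸ G → H := fun q => if q = 1 then 1 else q.out with hσGdef
  have hσGspec : ∀ q : H ⧸ G, (QuotientGroup.mk (σG q) : H ⧸ G) = q := by
    intro q
    by_cases h : q = 1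
    · simp [hσGdef, h]
    · simp [hσGdef, h, QuotientGroup.out_eq']
  have hσG1 : σG 1 = 1 := if_pos rfl
  set Γ : Set H := (fun p : H × H => p.1 * p.2 * (σG (QuotientGroup.mk (p.1 * p.2)))⁻¹) ''
      ((Set.range σG) ×ˢ (S ∪ S⁻¹)) with hΓdef
  have hΓfin : Γ.Finite :=
    Set.Finite.image _ ((Set.finite_range σG).prod (hSfin.union hSfin.inv))
  have hΓG : ∀ b ∈ Γ, b ∈ G := by
    rintro b ⟨⟨z, s⟩, -, rfl⟩
    refine (QuotientGroup.eq_one_iff _).mp ?_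
    rw [QuotientGroup.mk_mul, QuotientGroup.mk_inv, hσGspec]
    group
  have hΓGfin : {γ : G | (γ : H) ∈ Γ}.Finite :=
    hΓfin.preimage (fun a _ b _ h => Subtype.ext h)
  set K : ℕ := sSup (wordLength T '' {γ : G | (γ : H) ∈ Γ}) with hKdef
  have hKbd : ∀ (b : H) (hb : b ∈ Γ), wordLength T (⟨b, hΓG b hb⟩ : G) ≤ K :=
    fun b hb => le_csSup (hΓGfin.image _).bddAbove ⟨⟨b, hΓG b hb⟩, hb, rfl⟩
  -- Lemma A : passage from S-length to T-length on G
  have hlist : ∀ l : List H, (∀ b ∈ l, b ∈ Γ) → ∃ hl : l.prod ∈ G,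
      wordLength T (⟨l.prod, hl⟩ : G) ≤ K * l.length := by
    intro l
    induction l with
    | nil =>
        intro _
        refine ⟨G.one_mem, ?_⟩
        have h1 : (⟨List.prod [], G.one_mem⟩ : G) = 1 := by ext; simp
        rw [h1]
        simp [wordLength_one]
    | cons b l ih =>
        intro hb
        obtain ⟨hlG, hwl⟩ := ih (fun x hx => hb x (List.mem_cons_of_mem _ hx))
        have hbΓ := hb b (List.mem_cons_self ..)
        have hbG := hΓG b hbΓ
        have hprodG : (b :: l).prod ∈ G := by
          rw [List.prod_cons]; exact G.mul_mem hbG hlG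
        refine ⟨hprodG, ?_⟩
        have heq : (⟨(b :: l).prod, hprodG⟩ : G) = ⟨b, hbG⟩ * ⟨l.prod, hlG⟩ := by
          ext; simp [List.prod_cons]
        rw [heq]
        calc wordLength T (⟨b, hbG⟩ * ⟨l.prod, hlG⟩)
            ≤ wordLength T ⟨b, hbG⟩ + wordLength T ⟨l.prod, hlG⟩ :=
              wordLength_mul_le hTgen _ _
          _ ≤ K + K * l.length := add_le_add (hKbd b hbΓ) hwl
          _ = K * (b :: l).length := by simp [List.length_cons]; ring
  have hA : ∀ (h : H) (hh : h ∈ G), wordLength T (⟨h, hh⟩ : G) ≤ K * wordLength S h := by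
    intro h hh
    obtain ⟨w, hw, hwp, hwl⟩ := exists_word hSgen h
    obtain ⟨l, hlmem, hlp, hll⟩ := schreier σG hσGspec w 1 ⟨1, hσG1⟩
    have hmk : (QuotientGroup.mk (1 * w.prod) : H ⧸ G) = 1 := by
      rw [one_mul, hwp]
      exact (QuotientGroup.eq_one_iff h).mpr hh
    rw [hmk, hσG1, mul_one, one_mul, hwp] at hlp
    have hmemΓ : ∀ b ∈ l, b ∈ Γ := by
      intro b hb2
      obtain ⟨z', s, hz', hs, rfl⟩ := hlmem b hb2
      exact ⟨(z', s), Set.mem_prod.mpr ⟨hz', hw s hs⟩, rfl⟩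
    obtain ⟨hG2, hb2⟩ := hlist l hmemΓ
    have heq : (⟨h, hh⟩ : G) = ⟨l.prod, hG2⟩ := by ext; exact hlp.symm
    rw [heq]
    calc wordLength T (⟨l.prod, hG2⟩ : G) ≤ K * l.length := hb2
      _ = K * wordLength S h := by rw [hll, hwl]
  -- the constant
  refine ⟨((K * (1 + 3 * m) + 1 : ℕ) : ℝ), by exact_mod_cast Nat.succ_pos _, ?_⟩
  intro N hNnorm hNfin
  haveI := hNnorm
  haveI := hNfin
  set D : ℕ := quotDiam S N with hDdef
  have hdiam : ∀ h : H, ∃ n ∈ N, wordLength S (h * n) ≤ D := fun h => quotDiam_spec hSgen N h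
  rcases Nat.eq_zero_or_pos D with hD0 | hD1
  · -- degenerate case : N = ⊤
    have hNtop : ∀ h : H, h ∈ N := by
      intro h
      obtain ⟨n, hn, hw⟩ := hdiam h
      rw [hD0] at hw
      have h1 : h * n = 1 := eq_one_of_wordLength_eq_zero hSgen (Nat.le_zero.mp hw)
      have h2 : h = n⁻¹ := eq_inv_iff_mul_eq_one.mpr h1
      rw [h2]
      exact N.inv_mem hn
    have hLHS : quotDiam T (N.subgroupOf G) = 0 := by
      refine Nat.le_zero.mp ?_
      unfold quotDiam
      refine csSup_le ⟨_, Set.mem_range_self (1 : G)⟩ ?_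
      rintro x ⟨g, rfl⟩
      refine Nat.sInf_le ?_
      refine ⟨g⁻¹, ?_, ?_⟩
      · rw [Subgroup.mem_subgroupOf]; exact hNtop _
      · simp [wordLength_one]
    rw [hLHS, hD0]
    simp
  · -- main case
    have hrep : ∀ q : H ⧸ N, ∃ y : H, (QuotientGroup.mk y : H ⧸ N) = q ∧ wordLength S y ≤ D := by
      intro q
      obtain ⟨n, hn, hw⟩ := hdiam q.out
      exact ⟨q.out * n, by rw [QuotientGroup.mk_mul_of_mem _ hn, QuotientGroup.out_eq'], hw⟩
    choose y hy1 hy2 using hrep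
    set σN : H ⧸ N → H := fun q => if q = 1 then 1 else y q with hσNdef
    have hσN1 : σN 1 = 1 := if_pos rfl
    have hσNspec : ∀ q : H ⧸ N, (QuotientGroup.mk (σN q) : H ⧸ N) = q := by
      intro q
      by_cases h : q = 1
      · simp [hσNdef, h]
      · simp [hσNdef, h, hy1]
    have hσNwl : ∀ q : H ⧸ N, wordLength S (σN q) ≤ D := by
      intro q
      by_cases h : q = 1
      · simp [hσNdef, h, wordLength_one]
      · simp [hσNdef, h, hy2]
    set Λ : Set H := {b | b ∈ N ∧ wordLength S b ≤ 2 * D + 1} with hΛdef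
    have hNsub : ∀ n ∈ N, n ∈ Subgroup.closure Λ := by
      intro n hn
      obtain ⟨w, hw, hwp, -⟩ := exists_word hSgen n
      obtain ⟨l, hlmem, hlp, -⟩ := schreier σN hσNspec w 1 ⟨1, hσN1⟩
      have hmk : (QuotientGroup.mk (1 * w.prod) : H ⧸ N) = 1 := by
        rw [one_mul, hwp]
        exact (QuotientGroup.eq_one_iff n).mpr hn
      rw [hmk, hσN1, mul_one, one_mul, hwp] at hlp
      rw [← hlp]
      refine Subgroup.list_prod_mem _ fun b hb => Subgroup.subset_closure ?_
      obtain ⟨z', s, hz', hs, rfl⟩ := hlmem b hb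
      obtain ⟨q, rfl⟩ := hz'
      constructor
      · refine (QuotientGroup.eq_one_iff _).mp ?_
        rw [QuotientGroup.mk_mul, QuotientGroup.mk_inv, hσNspec]
        group
      · calc wordLength S (σN q * s * (σN (QuotientGroup.mk (σN q * s)))⁻¹)
            ≤ wordLength S (σN q * s) + wordLength S (σN (QuotientGroup.mk (σN q * s)))⁻¹ :=
              wordLength_mul_le hSgen _ _
          _ ≤ (wordLength S (σN q) + wordLength S s) +
                wordLength S (σN (QuotientGroup.mk (σN q * s))) :=
              add_le_add (wordLength_mul_le hSgen _ _) (wordLength_inv_le hSgen _)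
          _ ≤ (D + 1) + D := add_le_add (add_le_add (hσNwl q) (wordLength_single (hw s hs))) (hσNwl _)
          _ ≤ 2 * D + 1 := by omega
    -- per-element bound
    have hbound : ∀ g : G,
        sInf {ℓ : ℕ | ∃ μ ∈ N.subgroupOf G, wordLength T (g * μ) = ℓ} ≤ K * (1 + 3 * m) * D := by
      intro g
      obtain ⟨n, hnN, hxwl⟩ := hdiam (g : H)
      have hfmem : (QuotientGroup.mk' G) n ∈ Subgroup.closure ((QuotientGroup.mk' G) '' Λ) := by
        have h1 := Subgroup.mem_map_of_mem (QuotientGroup.mk' G) (hNsub n hnN)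
        rwa [MonoidHom.map_closure] at h1
      have hXsymm : ∀ b' : H ⧸ G, b'⁻¹ ∈ ((QuotientGroup.mk' G) '' Λ) →
          b' ∈ ((QuotientGroup.mk' G) '' Λ) := by
        rintro b' ⟨b, ⟨hbN, hbwl⟩, hb⟩
        refine ⟨b⁻¹, ⟨N.inv_mem hbN, (wordLength_inv_le hSgen b).trans hbwl⟩, ?_⟩
        rw [map_inv, hb, inv_inv]
      have hmem2 : (QuotientGroup.mk' G) n ∈
          Submonoid.closure (((QuotientGroup.mk' G) '' Λ) ∪ ((QuotientGroup.mk' G) '' Λ)⁻¹) := by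
        have h1 : (QuotientGroup.mk' G) n ∈
            (Subgroup.closure ((QuotientGroup.mk' G) '' Λ)).toSubmonoid := hfmem
        rwa [Subgroup.closure_toSubmonoid] at h1
      obtain ⟨lf, hlf, hlfp⟩ := Submonoid.exists_list_of_mem_closure hmem2
      have hlf' : ∀ b' ∈ lf, b' ∈ ((QuotientGroup.mk' G) '' Λ) := by
        intro b' hb'
        rcases hlf b' hb' with h | h
        · exact h
        · exact hXsymm b' (Set.mem_inv.mp h)
      obtain ⟨lf', hlf'mem, hlf'p, hlf'len⟩ := shorten _ lf.length lf le_rfl hlf'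
      have hlift : ∀ l : List (H ⧸ G), (∀ b' ∈ l, b' ∈ ((QuotientGroup.mk' G) '' Λ)) →
          ∃ ν : H, ν ∈ N ∧ (QuotientGroup.mk' G) ν = l.prod ∧
            wordLength S ν ≤ (2 * D + 1) * l.length := by
        intro l
        induction l with
        | nil => exact fun _ => ⟨1, N.one_mem, by simp, by simp [wordLength_one]⟩
        | cons b' l ih =>
            intro hb
            obtain ⟨ν, hν1, hν2, hν3⟩ := ih (fun x hx => hb x (List.mem_cons_of_mem _ hx))
            obtain ⟨c, ⟨hcN, hcwl⟩, hc⟩ := hb b' (List.mem_cons_self ..)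
            refine ⟨c * ν, N.mul_mem hcN hν1, by rw [map_mul, hc, hν2, List.prod_cons], ?_⟩
            calc wordLength S (c * ν) ≤ wordLength S c + wordLength S ν :=
                wordLength_mul_le hSgen _ _
              _ ≤ (2 * D + 1) + (2 * D + 1) * l.length := add_le_add hcwl hν3
              _ = (2 * D + 1) * (b' :: l).length := by simp [List.length_cons]; ring
      obtain ⟨ν, hνN, hνmk, hνwl⟩ := hlift lf' hlf'mem
      have hνwl' : wordLength S ν ≤ (2 * D + 1) * m :=
        le_trans hνwl (Nat.mul_le_mul_left _ hlf'len)
      set g₀ : H := (g : H) * n * ν⁻¹ with hg₀def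
      have hg₀G : g₀ ∈ G := by
        have h1 : (QuotientGroup.mk' G) g₀ = 1 := by
          rw [hg₀def, map_mul, map_mul, map_inv]
          have hgG : (QuotientGroup.mk' G) (g : H) = 1 := (QuotientGroup.eq_one_iff _).mpr g.2
          rw [hgG, hνmk, hlf'p, hlfp]
          group
        exact (QuotientGroup.eq_one_iff _).mp h1
      have hg₀wl : wordLength S g₀ ≤ D + (2 * D + 1) * m := by
        calc wordLength S g₀ ≤ wordLength S ((g : H) * n) + wordLength S ν⁻¹ :=
            wordLength_mul_le hSgen _ _
          _ ≤ D + (2 * D + 1) * m :=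
            add_le_add hxwl ((wordLength_inv_le hSgen ν).trans hνwl')
      have hμG : (g : H)⁻¹ * g₀ ∈ G := G.mul_mem (G.inv_mem g.2) hg₀G
      have hμN : (g : H)⁻¹ * g₀ ∈ N := by
        have h1 : (g : H)⁻¹ * g₀ = n * ν⁻¹ := by rw [hg₀def]; group
        rw [h1]
        exact N.mul_mem hnN (N.inv_mem hνN)
      have hμmem : (⟨(g : H)⁻¹ * g₀, hμG⟩ : G) ∈ N.subgroupOf G := by
        rwa [Subgroup.mem_subgroupOf]
      have hgμ : g * (⟨(g : H)⁻¹ * g₀, hμG⟩ : G) = (⟨g₀, hg₀G⟩ : G) := by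
        ext; simp
      refine le_trans (Nat.sInf_le ⟨_, hμmem, rfl⟩) ?_
      rw [hgμ]
      calc wordLength T (⟨g₀, hg₀G⟩ : G) ≤ K * wordLength S g₀ := hA g₀ hg₀G
        _ ≤ K * (D + (2 * D + 1) * m) := Nat.mul_le_mul_left _ hg₀wl
        _ ≤ K * (1 + 3 * m) * D := by
            have h1 : D + (2 * D + 1) * m ≤ (1 + 3 * m) * D := by nlinarith
            calc K * (D + (2 * D + 1) * m) ≤ K * ((1 + 3 * m) * D) := Nat.mul_le_mul_left _ h1
              _ = K * (1 + 3 * m) * D := by ring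
    have hsup : quotDiam T (N.subgroupOf G) ≤ K * (1 + 3 * m) * D := by
      unfold quotDiam
      refine csSup_le ⟨_, Set.mem_range_self (1 : G)⟩ ?_
      rintro x ⟨g, rfl⟩
      exact hbound g
    calc (quotDiam T (N.subgroupOf G) : ℝ) ≤ ((K * (1 + 3 * m) * D : ℕ) : ℝ) :=
        Nat.cast_le.mpr hsup
      _ ≤ ((K * (1 + 3 * m) + 1 : ℕ) : ℝ) * (D : ℕ) := by
          push_cast
          have h1 : (0 : ℝ) ≤ (D : ℝ) := Nat.cast_nonneg _
          nlinarith
end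

section
/- Let H be a finite group with a normal abelian subgroup A that is generated by n ≥ 1 elements, and let d = [H:A] be the index of A in H. Then the number of normal subgroups N of H with N ∩ A = {1} is at most 2^d · d^{nd}. -/
private lemma aux_torsion {G : Type*} [CommGroup G] [Finite G] {n d : ℕ} (hd : 0 < d)
    {T : Finset G} (hT : T.card ≤ n) (hTgen : Subgroup.closure (T : Set G) = ⊤) :
    Nat.card {g : G // g ^ d = 1} ≤ d ^ n := by
  classical
  set φ : G →* G := powMonoidHom d with hφ
  have h1 : Nat.card {g : G // g ^ d = 1} = Nat.card φ.ker :=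
    Nat.card_congr (Equiv.subtypeEquivRight fun g => by
      simp [MonoidHom.mem_ker, hφ])
  have hker : Nat.card (G ⧸ φ.ker) * Nat.card φ.ker = Nat.card G :=
    (Subgroup.card_eq_card_quotient_mul_card_subgroup φ.ker).symm
  have hiso : Nat.card (G ⧸ φ.ker) = Nat.card φ.range :=
    Nat.card_congr (QuotientGroup.quotientKerEquivRange φ).toEquiv
  have hcoker : Nat.card (G ⧸ φ.range) * Nat.card φ.range = Nat.card G :=
    (Subgroup.card_eq_card_quotient_mul_card_subgroup φ.range).symm
  have hrpos : 0 < Nat.card φ.range := Nat.card_pos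
  have h2 : Nat.card φ.ker = Nat.card (G ⧸ φ.range) := by
    have : Nat.card φ.ker * Nat.card φ.range = Nat.card (G ⧸ φ.range) * Nat.card φ.range := by
      rw [hcoker, ← hker, hiso, mul_comm]
    exact Nat.eq_of_mul_eq_mul_right hrpos this
  rw [h1, h2]
  -- now bound the cokernel
  set R := φ.range with hR
  have hpow : ∀ t : G, ((t : G ⧸ R)) ^ d = 1 := by
    intro t
    rw [← QuotientGroup.mk_pow]
    exact (QuotientGroup.eq_one_iff _).mpr ⟨t, rfl⟩
  have hsurj : Function.Surjective
      (fun f : ({x // x ∈ T} → Fin d) =>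
        ∏ t ∈ T.attach, ((t : G) : G ⧸ R) ^ ((f t : ℕ))) := by
    intro q
    obtain ⟨g, rfl⟩ := QuotientGroup.mk'_surjective R q
    have hg : g ∈ Subgroup.closure (T : Set G) := hTgen ▸ Subgroup.mem_top g
    have key : ∃ f : {x // x ∈ T} → ℕ,
        (QuotientGroup.mk' R g) = ∏ t ∈ T.attach, ((t : G) : G ⧸ R) ^ (f t) := by
      induction hg using Subgroup.closure_induction with
      | mem t ht =>
        refine ⟨fun s => if s = (⟨t, ht⟩ : {x // x ∈ T}) then 1 else 0, ?_⟩
        rw [Finset.prod_eq_single_of_mem (⟨t, ht⟩ : {x // x ∈ T}) (Finset.mem_attach _ _)]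
        · simp
        · intro b _ hb
          simp [hb]
      | one => exact ⟨fun _ => 0, by simp⟩
      | mul x y hx hy ihx ihy =>
        obtain ⟨f1, h1⟩ := ihx
        obtain ⟨f2, h2⟩ := ihy
        refine ⟨f1 + f2, ?_⟩
        rw [map_mul, h1, h2, ← Finset.prod_mul_distrib]
        exact Finset.prod_congr rfl fun t _ => by rw [Pi.add_apply, pow_add]
      | inv x hx ihx =>
        obtain ⟨f, h⟩ := ihx
        refine ⟨fun t => f t * (d - 1), ?_⟩
        rw [map_inv, h, ← Finset.prod_inv_distrib]
        refine Finset.prod_congr rfl fun t _ => ?_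
        refine inv_eq_of_mul_eq_one_left ?_
        rw [← pow_add]
        have : f t * (d - 1) + f t = f t * d := by
          cases d with
          | zero => omega
          | succ d' => simp [Nat.mul_succ, Nat.succ_sub_one]
        rw [this, mul_comm, pow_mul, hpow, one_pow]
    obtain ⟨f, hf⟩ := key
    refine ⟨fun t => ⟨f t % d, Nat.mod_lt _ hd⟩, ?_⟩
    simp only
    rw [hf]
    exact Finset.prod_congr rfl fun t _ => (pow_eq_pow_mod (f t) (hpow t)).symm
  calc Nat.card (G ⧸ R) ≤ Nat.card ({x // x ∈ T} → Fin d) :=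
        Nat.card_le_card_of_surjective _ hsurj
    _ = d ^ T.card := by
        rw [Nat.card_fun, Nat.card_eq_fintype_card, Fintype.card_fin,
          Nat.card_eq_fintype_card, Fintype.card_coe]
    _ ≤ d ^ n := Nat.pow_le_pow_right hd hT

open Classical in
private noncomputable def pickE {H Q : Type*} [Group H] (N : Subgroup H) (π : H → Q) (q : Q) :
    H :=
  if h : ∃ x, x ∈ N ∧ π x = q then h.choose else 1

open Classical in
private lemma pickE_spec {H Q : Type*} [Group H] (N : Subgroup H) (π : H → Q) (q : Q)
    (h : ∃ x, x ∈ N ∧ π x = q) : pickE N π q ∈ N ∧ π (pickE N π q) = q := by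
  rw [pickE, dif_pos h]; exact h.choose_spec

open Classical in
private lemma pickE_neg {H Q : Type*} [Group H] (N : Subgroup H) (π : H → Q) (q : Q)
    (h : ¬ ∃ x, x ∈ N ∧ π x = q) : pickE N π q = 1 := by
  rw [pickE, dif_neg h]

open Classical in
private noncomputable def refN {H Q : Type*} [Group H] (A : Subgroup H) (π : H → Q)
    (s : Set Q) : Subgroup H :=
  if h : ∃ N : Subgroup H, (N.Normal ∧ N ⊓ A = ⊥) ∧ {q | ∃ x, x ∈ N ∧ π x = q} = s then
    h.choose else ⊥

open Classical in
private lemma refN_spec {H Q : Type*} [Group H] (A : Subgroup H) (π : H → Q) (s : Set Q)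
    (h : ∃ N : Subgroup H, (N.Normal ∧ N ⊓ A = ⊥) ∧ {q | ∃ x, x ∈ N ∧ π x = q} = s) :
    ((refN A π s).Normal ∧ refN A π s ⊓ A = ⊥) ∧
      {q | ∃ x, x ∈ refN A π s ∧ π x = q} = s := by
  rw [refN, dif_pos h]; exact h.choose_spec

/-- Let `H` be a finite group with a normal abelian subgroup `A` generated
by `n ≥ 1` elements, and let `d = [H:A]`.  Then the number of normal subgroups `N` of `H`
with `N ∩ A = {1}` is at most `2^d · d^(n·d)`. -/
theorem stmt10 {H : Type*} [Group H] [Finite H] (A : Subgroup H) (hAnorm : A.Normal)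
    (hAcomm : ∀ x y : A, x * y = y * x)
    (n : ℕ) (hn : 1 ≤ n)
    (hAgen : ∃ T : Finset H, T.card ≤ n ∧ Subgroup.closure (T : Set H) = A) :
    {N : Subgroup H | N.Normal ∧ N ⊓ A = ⊥}.ncard ≤
      2 ^ A.index * A.index ^ (n * A.index) := by
  classical
  haveI := hAnorm
  obtain ⟨T, hTcard, hTgen⟩ := hAgen
  set d := A.index with hdd
  letI : CommGroup ↥A := { (inferInstance : Group ↥A) with mul_comm := hAcomm }
  have hdcard : Nat.card (H ⧸ A) = d := by rw [hdd, Subgroup.index_eq_card]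
  have hd1 : 0 < d := by rw [← hdcard]; exact Nat.card_pos
  -- torsion bound inside A
  have hTA : ∀ t ∈ T, t ∈ A := fun t ht => hTgen ▸ Subgroup.subset_closure ht
  set T' : Finset ↥A := T.attach.map
    ⟨fun t => (⟨t.1, hTA t.1 t.2⟩ : ↥A), fun a b hab => by
      apply Subtype.ext
      exact congrArg (Subtype.val : ↥A → H) hab⟩
    with hT'
  have hT'card : T'.card ≤ n := by
    rw [hT', Finset.card_map, Finset.card_attach]; exact hTcard
  have hT'gen : Subgroup.closure (T' : Set ↥A) = ⊤ := by
    apply Subgroup.map_injective A.subtype_injective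
    rw [MonoidHom.map_closure, ← MonoidHom.range_eq_map, Subgroup.range_subtype]
    have h8 : T'.image A.subtype = T := by
      rw [hT', Finset.map_eq_image, Finset.image_image]
      exact Finset.attach_image_val
    rw [← Finset.coe_image, h8, hTgen]
  have htor : Nat.card {a : ↥A // a ^ d = 1} ≤ d ^ n := aux_torsion hd1 hT'card hT'gen
  have hK : Nat.card {x : H // x ∈ A ∧ x ^ d = 1} ≤ d ^ n := by
    refine le_trans (le_of_eq (Nat.card_congr ?_)) htor
    exact
      { toFun := fun x => ⟨⟨x.1, x.2.1⟩, Subtype.ext (by simpa using x.2.2)⟩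
        invFun := fun a => ⟨a.1.1, a.1.2, by simpa [Subtype.ext_iff] using a.2⟩
        left_inv := fun x => rfl
        right_inv := fun a => rfl }
  -- quotient setup
  set π : H →* H ⧸ A := QuotientGroup.mk' A with hπ
  have hπker : ∀ x : H, π x = 1 → x ∈ A := fun x hx => (QuotientGroup.eq_one_iff x).mp hx
  have hqd : ∀ q : H ⧸ A, q ^ d = 1 := fun q => by rw [← hdcard]; exact pow_card_eq_one'
  set img : Subgroup H → Set (H ⧸ A) := fun N => {q | ∃ x, x ∈ N ∧ π x = q} with himg
  have himg_mem : ∀ (N : Subgroup H) (q : H ⧸ A), q ∈ img N ↔ ∃ x, x ∈ N ∧ π x = q :=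
    fun N q => Iff.rfl
  have huniq : ∀ N : Subgroup H, N ⊓ A = ⊥ →
      ∀ x y : H, x ∈ N → y ∈ N → π x = π y → x = y := by
    intro N hNA x y hx hy hxy
    have h1 : x * y⁻¹ ∈ N := N.mul_mem hx (N.inv_mem hy)
    have h2 : x * y⁻¹ ∈ A := hπker _ (by rw [map_mul, map_inv, hxy, mul_inv_cancel])
    have h3 : x * y⁻¹ ∈ N ⊓ A := Subgroup.mem_inf.mpr ⟨h1, h2⟩
    rw [hNA, Subgroup.mem_bot] at h3
    exact mul_inv_eq_one.mp h3
  have hcent : ∀ N : Subgroup H, N.Normal → N ⊓ A = ⊥ →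
      ∀ x ∈ N, ∀ a ∈ A, x * a = a * x := by
    intro N hNn hNA x hx a ha
    have h1 : x * a * x⁻¹ * a⁻¹ ∈ A := A.mul_mem (hAnorm.conj_mem a ha x) (A.inv_mem ha)
    have h2 : x * a * x⁻¹ * a⁻¹ ∈ N := by
      have h' : a * x⁻¹ * a⁻¹ ∈ N := hNn.conj_mem x⁻¹ (N.inv_mem hx) a
      have h'' := N.mul_mem hx h'
      convert h'' using 1
      group
    have h3 : x * a * x⁻¹ * a⁻¹ = 1 := by
      have h4 := Subgroup.mem_inf.mpr ⟨h2, h1⟩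
      rw [hNA, Subgroup.mem_bot] at h4
      exact h4
    have h4 : x * a * x⁻¹ = a := mul_inv_eq_one.mp h3
    exact mul_inv_eq_iff_eq_mul.mp h4
  have hpick : ∀ N : Subgroup H, ∀ q ∈ img N, pickE N (⇑π) q ∈ N ∧ π (pickE N (⇑π) q) = q :=
    fun N q hq => pickE_spec N (⇑π) q ((himg_mem N q).mp hq)
  have hpickU : ∀ N : Subgroup H, N ⊓ A = ⊥ → ∀ x ∈ N, pickE N (⇑π) (π x) = x := by
    intro N hNA x hx
    have hq : π x ∈ img N := (himg_mem _ _).mpr ⟨x, hx, rfl⟩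
    obtain ⟨h1, h2⟩ := hpick N _ hq
    exact huniq N hNA _ _ h1 hx h2
  have hpick1 : ∀ N : Subgroup H, N ⊓ A = ⊥ → pickE N (⇑π) 1 = 1 := by
    intro N hNA
    have h1 := hpickU N hNA 1 N.one_mem
    rw [map_one] at h1
    exact h1
  set F : Subgroup H → (H ⧸ A) → H :=
    fun N q => pickE N (⇑π) q * (pickE (refN A (⇑π) (img N)) (⇑π) q)⁻¹ with hF
  -- main per-subgroup properties
  have main : ∀ N : Subgroup H, N.Normal → N ⊓ A = ⊥ →
      ∀ q : H ⧸ A, F N q ∈ A ∧ (F N q) ^ d = 1 := by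
    intro N hNn hNA
    have hs_ex : ∃ N' : Subgroup H, (N'.Normal ∧ N' ⊓ A = ⊥) ∧
        {q | ∃ x, x ∈ N' ∧ π x = q} = img N := ⟨N, ⟨hNn, hNA⟩, by rw [himg]⟩
    obtain ⟨⟨hMn, hMA⟩, hMimg₀⟩ := refN_spec A (⇑π) (img N) hs_ex
    set M := refN A (⇑π) (img N) with hM
    have hMimg : img M = img N := by rw [himg]; exact hMimg₀
    have hs1 : (1 : H ⧸ A) ∈ img N := (himg_mem N 1).mpr ⟨1, N.one_mem, map_one π⟩
    have hsmul : ∀ q1 ∈ img N, ∀ q2 ∈ img N, q1 * q2 ∈ img N := by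
      intro q1 hq1 q2 hq2
      obtain ⟨x1, hx1, hπ1⟩ := (himg_mem N q1).mp hq1
      obtain ⟨x2, hx2, hπ2⟩ := (himg_mem N q2).mp hq2
      exact (himg_mem N _).mpr ⟨x1 * x2, N.mul_mem hx1 hx2, by rw [map_mul, hπ1, hπ2]⟩
    have hF1 : F N 1 = 1 := by
      simp only [hF, ← hM]
      rw [hpick1 N hNA, hpick1 M hMA, inv_one, mul_one]
    have hhom : ∀ q1 ∈ img N, ∀ q2 ∈ img N, F N (q1 * q2) = F N q1 * F N q2 := by
      intro q1 hq1 q2 hq2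
      obtain ⟨hn1, hπn1⟩ := hpick N q1 hq1
      obtain ⟨hn2, hπn2⟩ := hpick N q2 hq2
      have hq1M : q1 ∈ img M := by rw [hMimg]; exact hq1
      have hq2M : q2 ∈ img M := by rw [hMimg]; exact hq2
      obtain ⟨hm1, hπm1⟩ := hpick M q1 hq1M
      obtain ⟨hm2, hπm2⟩ := hpick M q2 hq2M
      have e12 : pickE N (⇑π) (q1 * q2) = pickE N (⇑π) q1 * pickE N (⇑π) q2 := by
        have hx : pickE N (⇑π) q1 * pickE N (⇑π) q2 ∈ N := N.mul_mem hn1 hn2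
        have hπx : π (pickE N (⇑π) q1 * pickE N (⇑π) q2) = q1 * q2 := by
          rw [map_mul, hπn1, hπn2]
        have h5 := hpickU N hNA _ hx
        rw [hπx] at h5
        exact h5
      have f12 : pickE M (⇑π) (q1 * q2) = pickE M (⇑π) q1 * pickE M (⇑π) q2 := by
        have hx : pickE M (⇑π) q1 * pickE M (⇑π) q2 ∈ M := M.mul_mem hm1 hm2
        have hπx : π (pickE M (⇑π) q1 * pickE M (⇑π) q2) = q1 * q2 := by
          rw [map_mul, hπm1, hπm2]
        have h5 := hpickU M hMA _ hx
        rw [hπx] at h5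
        exact h5
      have hcA : pickE N (⇑π) q2 * (pickE M (⇑π) q2)⁻¹ ∈ A :=
        hπker _ (by rw [map_mul, map_inv, hπn2, hπm2, mul_inv_cancel])
      have hcomm : (pickE M (⇑π) q1)⁻¹ * (pickE N (⇑π) q2 * (pickE M (⇑π) q2)⁻¹) =
          (pickE N (⇑π) q2 * (pickE M (⇑π) q2)⁻¹) * (pickE M (⇑π) q1)⁻¹ :=
        hcent M hMn hMA _ (M.inv_mem hm1) _ hcA
      simp only [hF, ← hM]
      rw [e12, f12, mul_inv_rev]
      calc pickE N (⇑π) q1 * pickE N (⇑π) q2 *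
            ((pickE M (⇑π) q2)⁻¹ * (pickE M (⇑π) q1)⁻¹)
          = pickE N (⇑π) q1 *
            ((pickE N (⇑π) q2 * (pickE M (⇑π) q2)⁻¹) * (pickE M (⇑π) q1)⁻¹) := by group
        _ = pickE N (⇑π) q1 *
            ((pickE M (⇑π) q1)⁻¹ * (pickE N (⇑π) q2 * (pickE M (⇑π) q2)⁻¹)) := by
            rw [← hcomm]
        _ = pickE N (⇑π) q1 * (pickE M (⇑π) q1)⁻¹ *
            (pickE N (⇑π) q2 * (pickE M (⇑π) q2)⁻¹) := by group
    have hspow : ∀ q ∈ img N, ∀ k : ℕ, q ^ k ∈ img N := by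
      intro q hq k
      induction k with
      | zero => simpa using hs1
      | succ k ih => rw [pow_succ]; exact hsmul _ ih _ hq
    have hpowk : ∀ q ∈ img N, ∀ k : ℕ, F N (q ^ k) = (F N q) ^ k := by
      intro q hq k
      induction k with
      | zero => simpa using hF1
      | succ k ih => rw [pow_succ, hhom _ (hspow q hq k) _ hq, ih, pow_succ]
    intro q
    by_cases hq : q ∈ img N
    · constructor
      · apply hπker
        have hqM : q ∈ img M := by rw [hMimg]; exact hq
        simp only [hF, ← hM]
        rw [map_mul, map_inv, (hpick N q hq).2, (hpick M q hqM).2, mul_inv_cancel]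
      · rw [← hpowk q hq d, hqd q, hF1]
    · have hnN : ¬ ∃ x, x ∈ N ∧ π x = q := fun hc => hq ((himg_mem N q).mpr hc)
      have hnM : ¬ ∃ x, x ∈ M ∧ π x = q := fun hc => hq (hMimg ▸ (himg_mem M q).mpr hc)
      have hFq : F N q = 1 := by
        simp only [hF, ← hM]
        rw [pickE_neg _ _ _ hnN, pickE_neg _ _ _ hnM, inv_one, mul_one]
      rw [hFq]
      exact ⟨A.one_mem, one_pow d⟩
  -- the injection
  set S : Set (Subgroup H) := {N : Subgroup H | N.Normal ∧ N ⊓ A = ⊥} with hS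
  set Φ : ↥S → Set (H ⧸ A) × ((H ⧸ A) → {x : H // x ∈ A ∧ x ^ d = 1}) :=
    fun N => (img N.1, fun q => ⟨F N.1 q, (main N.1 N.2.1 N.2.2 q).1,
      (main N.1 N.2.1 N.2.2 q).2⟩) with hΦdef
  have key : ∀ P P' : Subgroup H, P ∈ S → P' ∈ S → img P = img P' →
      (∀ q, F P q = F P' q) → ∀ x ∈ P, x ∈ P' := by
    intro P P' hP hP' himg12 hf x hx
    have hq : π x ∈ img P := (himg_mem _ _).mpr ⟨x, hx, rfl⟩
    have e1 : pickE P (⇑π) (π x) = x := hpickU P hP.2 x hx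
    have h6 := hf (π x)
    simp only [hF, himg12] at h6
    have e2 : pickE P (⇑π) (π x) = pickE P' (⇑π) (π x) := mul_right_cancel h6
    have hq' : π x ∈ img P' := himg12 ▸ hq
    have h7 := (hpick P' _ hq').1
    rw [← e2, e1] at h7
    exact h7
  have hΦ : Function.Injective Φ := by
    rintro ⟨N, hN⟩ ⟨N', hN'⟩ h
    have h1 : img N = img N' := congrArg Prod.fst h
    have h2 : ∀ q, F N q = F N' q := fun q =>
      congrArg Subtype.val (congrFun (congrArg Prod.snd h) q)
    apply Subtype.ext
    ext x
    exact ⟨fun hx => key N N' hN hN' h1 h2 x hx,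
      fun hx => key N' N hN' hN h1.symm (fun q => (h2 q).symm) x hx⟩
  -- counting
  rw [← Nat.card_coe_set_eq]
  calc Nat.card ↥S
      ≤ Nat.card (Set (H ⧸ A) × ((H ⧸ A) → {x : H // x ∈ A ∧ x ^ d = 1})) :=
        Nat.card_le_card_of_injective Φ hΦ
    _ = Nat.card (Set (H ⧸ A)) * Nat.card ((H ⧸ A) → {x : H // x ∈ A ∧ x ^ d = 1}) :=
        Nat.card_prod _ _
    _ ≤ 2 ^ d * d ^ (n * d) := by
        have hA1 : Nat.card (Set (H ⧸ A)) = 2 ^ d := by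
          have e : Set (H ⧸ A) ≃ ((H ⧸ A) → Bool) :=
            Equiv.arrowCongr (Equiv.refl _) Equiv.propEquivBool
          rw [Nat.card_congr e, Nat.card_fun, hdcard]
          congr 1
          rw [Nat.card_eq_fintype_card, Fintype.card_bool]
        have hA2 : Nat.card ((H ⧸ A) → {x : H // x ∈ A ∧ x ^ d = 1}) ≤ d ^ (n * d) := by
          rw [Nat.card_fun, hdcard]
          calc Nat.card {x : H // x ∈ A ∧ x ^ d = 1} ^ d ≤ (d ^ n) ^ d :=
                Nat.pow_le_pow_left hK d
            _ = d ^ (n * d) := (pow_mul d n d).symm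
        exact Nat.mul_le_mul (le_of_eq hA1) hA2
end

section
/- Let n ≥ 3 and let H be a group with a normal subgroup A of finite index such that A is isomorphic to ℤⁿ. Then there exists a constant C > 0 such that for every finite-index subgroup 𝒩 of A, the number of normal subgroups N of H with N ∩ A = 𝒩 is at most C. -/
open scoped Pointwise

/-- Key commutation computation: if `h` almost-centralizes `A` mod `M`, then powers of `h*c`
split as `h^j * c^j` mod `M`. -/
lemma aux_pow {H : Type*} [Group H] (A M : Subgroup H) (hAnorm : A.Normal) (hMA : M ≤ A)
    (hcomm : ∀ a b : H, a ∈ A → b ∈ A → a * b = b * a)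
    {h c : H} (hc : c ∈ A) (hcond : ∀ a ∈ A, h * a * h⁻¹ * a⁻¹ ∈ M) :
    ∀ j : ℕ, ∃ m ∈ M, (h * c) ^ j = h ^ j * c ^ j * m := by
  have hconj : ∀ u, u ∈ A → ∃ m ∈ M, h⁻¹ * u * h = u * m := by
    intro u hu
    have hu' : h⁻¹ * u * h ∈ A := by
      have := hAnorm.conj_mem u hu h⁻¹
      simpa using this
    have hm0 : h * (h⁻¹ * u * h) * h⁻¹ * (h⁻¹ * u * h)⁻¹ ∈ M := hcond _ hu'
    have key : h * (h⁻¹ * u * h) * h⁻¹ * (h⁻¹ * u * h)⁻¹ = u * (h⁻¹ * u * h)⁻¹ := by group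
    rw [key] at hm0
    refine ⟨(u * (h⁻¹ * u * h)⁻¹)⁻¹, M.inv_mem hm0, ?_⟩
    have hc2 := hcomm u (h⁻¹ * u * h) hu hu'
    calc h⁻¹ * u * h = u * (h⁻¹ * u * h) * u⁻¹ := by rw [hc2]; group
      _ = u * (u * (h⁻¹ * u * h)⁻¹)⁻¹ := by group
  intro j
  induction j with
  | zero => exact ⟨1, M.one_mem, by simp⟩
  | succ j ih =>
    obtain ⟨m, hm, heq⟩ := ih
    have hu : c ^ j * m ∈ A := A.mul_mem (A.pow_mem hc j) (hMA hm)
    obtain ⟨m', hm', heq'⟩ := hconj _ hu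
    refine ⟨m * m', M.mul_mem hm hm', ?_⟩
    have step1 : (h * c) ^ (j + 1) = h ^ j * (c ^ j * m) * (h * c) := by
      rw [pow_succ, heq]; group
    have step2 : h ^ j * (c ^ j * m) * (h * c) = h ^ (j+1) * (h⁻¹ * (c ^ j * m) * h) * c := by
      group
    rw [step1, step2, heq']
    have hcm : (m * m') * c = c * (m * m') :=
      hcomm _ _ (A.mul_mem (hMA hm) (hMA hm')) hc
    calc h ^ (j+1) * (c ^ j * m * m') * c
        = h ^ (j+1) * c ^ j * ((m * m') * c) := by group
      _ = h ^ (j+1) * c ^ j * (c * (m * m')) := by rw [hcm]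
      _ = h ^ (j+1) * c ^ (j+1) * (m * m') := by group

/-- Counting cosets of `M` by elements of `K`, where `K` is an `n`-generated abelian group
with `x^k ∈ M` for all `x ∈ K`. -/
lemma aux_D {H : Type*} [Group H] (n k : ℕ) (hk : k ≠ 0) (M K : Subgroup H)
    (hKM : ∀ x ∈ K, x ^ k ∈ M)
    (G : Multiplicative (Fin n → ℤ) →* H)
    (hG1 : ∀ v, G v ∈ K) (hG2 : ∀ c ∈ K, ∃ v, G v = c) :
    Nat.card ((fun c => c • (M : Set H)) '' (K : Set H)) ≤ k ^ n ∧
      ((fun c => c • (M : Set H)) '' (K : Set H)).Finite := by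
  haveI : NeZero k := ⟨hk⟩
  set D : Set (Set H) := (fun c => c • (M : Set H)) '' (K : Set H) with hD
  set F : (Fin n → ZMod k) → ↥D := fun x =>
    ⟨G (Multiplicative.ofAdd (fun i => ((x i).val : ℤ))) • (M : Set H),
      ⟨_, hG1 _, rfl⟩⟩ with hF
  have hFsurj : Function.Surjective F := by
    rintro ⟨s, c, hcK, rfl⟩
    obtain ⟨v, hv⟩ := hG2 c hcK
    refine ⟨fun i => ((Multiplicative.toAdd v i : ℤ) : ZMod k), ?_⟩
    apply Subtype.ext
    show G (Multiplicative.ofAdd _) • (M : Set H) = c • (M : Set H)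
    rw [leftCoset_eq_iff]
    set s : Fin n → ℤ := fun i => (((Multiplicative.toAdd v i : ℤ) : ZMod k).val : ℤ) with hs
    have hdvd : ∀ i, (k : ℤ) ∣ (Multiplicative.toAdd v i - s i) := by
      intro i
      rw [← ZMod.intCast_zmod_eq_zero_iff_dvd]
      push_cast [hs]
      simp [ZMod.intCast_cast, ZMod.intCast_zmod_cast]
    choose u hu using hdvd
    have hvs : Multiplicative.toAdd v - s = k • u := by
      funext i
      simp [hu i, mul_comm]
    have key : (G (Multiplicative.ofAdd s))⁻¹ * c = G (Multiplicative.ofAdd u) ^ k := by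
      have hre : Multiplicative.toAdd v - s = -s + Multiplicative.toAdd v := by abel
      rw [← hv, ← map_pow, ← ofAdd_nsmul, ← hvs, hre, ofAdd_add, ofAdd_neg, map_mul, map_inv]
      simp
    rw [key]
    exact hKM _ (hG1 _)
  constructor
  · calc Nat.card ↥D ≤ Nat.card (Fin n → ZMod k) := Nat.card_le_card_of_surjective F hFsurj
      _ = k ^ n := by simp [Nat.card_fun, Nat.card_zmod]
  · rw [← Set.finite_coe_iff]
    exact Finite.of_surjective F hFsurj

/-- Every subgroup `K` of a group isomorphic to `ℤⁿ` admits a "surjection" from `ℤⁿ`. -/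
lemma aux_G {H : Type*} [Group H] (n : ℕ) (A K : Subgroup H) (hKA : K ≤ A)
    (e : A ≃* Multiplicative (Fin n → ℤ)) :
    ∃ G : Multiplicative (Fin n → ℤ) →* H, (∀ v, G v ∈ K) ∧ (∀ c ∈ K, ∃ v, G v = c) := by
  classical
  -- the additive subgroup of ℤⁿ corresponding to K
  set J0 : AddSubgroup (Fin n → ℤ) :=
    { carrier := {v | ((e.symm (Multiplicative.ofAdd v) : A) : H) ∈ K}
      zero_mem' := by
        simp only [Set.mem_setOf_eq]
        have : e.symm (Multiplicative.ofAdd 0) = 1 := by simp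
        rw [this]; simpa using K.one_mem
      add_mem' := by
        intro a b ha hb
        simp only [Set.mem_setOf_eq] at *
        have : e.symm (Multiplicative.ofAdd (a + b)) =
            e.symm (Multiplicative.ofAdd a) * e.symm (Multiplicative.ofAdd b) := by
          rw [ofAdd_add, map_mul]
        rw [this]
        push_cast
        exact K.mul_mem ha hb
      neg_mem' := by
        intro a ha
        simp only [Set.mem_setOf_eq] at *
        have : e.symm (Multiplicative.ofAdd (-a)) = (e.symm (Multiplicative.ofAdd a))⁻¹ := by
          rw [ofAdd_neg, map_inv]
        rw [this]
        push_cast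
        exact K.inv_mem ha } with hJ0
  set J : Submodule ℤ (Fin n → ℤ) := AddSubgroup.toIntSubmodule J0 with hJdef
  obtain ⟨m, bJ⟩ := Submodule.basisOfPid (Pi.basisFun ℤ (Fin n)) J
  -- a linear surjection ℤⁿ → J
  set gJ : (Fin n → ℤ) →ₗ[ℤ] J :=
    (Pi.basisFun ℤ (Fin n)).constr ℤ
      (fun i => if h : (i : ℕ) < m then bJ ⟨(i : ℕ), h⟩ else 0) with hgJ
  have hmn : m ≤ n := by
    have h1 : Module.finrank ℤ J = m := by
      rw [Module.finrank_eq_card_basis bJ, Fintype.card_fin]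
    have h2 : Module.finrank ℤ (Fin n → ℤ) = n := by
      simp [Module.finrank_pi]
    have := J.finrank_le
    rw [h1, h2] at this
    exact this
  have hgJsurj : ∀ x : J, ∃ v, gJ v = x := by
    have hrange : ∀ j : Fin m, bJ j ∈ LinearMap.range gJ := by
      intro j
      refine ⟨Pi.basisFun ℤ (Fin n) ⟨(j : ℕ), lt_of_lt_of_le j.2 hmn⟩, ?_⟩
      rw [hgJ, Module.Basis.constr_basis]
      simp
    intro x
    have hx : x ∈ (⊤ : Submodule ℤ J) := trivial
    rw [← Module.Basis.span_eq bJ] at hx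
    have : Submodule.span ℤ (Set.range bJ) ≤ LinearMap.range gJ := by
      rw [Submodule.span_le]
      rintro _ ⟨j, rfl⟩
      exact hrange j
    exact this hx
  refine ⟨A.subtype.comp (e.symm.toMonoidHom.comp
    (AddMonoidHom.toMultiplicative (J.subtype.toAddMonoidHom.comp gJ.toAddMonoidHom))), ?_, ?_⟩
  · intro v
    have := (gJ (Multiplicative.toAdd v)).2
    exact this
  · intro c hc
    set a : A := ⟨c, hKA hc⟩ with ha
    have hv0 : Multiplicative.toAdd (e a) ∈ J := by
      show ((e.symm (Multiplicative.ofAdd (Multiplicative.toAdd (e a))) : A) : H) ∈ K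
      simp [ha, hc]
    obtain ⟨v, hv⟩ := hgJsurj ⟨_, hv0⟩
    refine ⟨Multiplicative.ofAdd v, ?_⟩
    show ((e.symm (Multiplicative.ofAdd ((gJ (Multiplicative.toAdd (Multiplicative.ofAdd v))) : Fin n → ℤ)) : A) : H) = c
    rw [toAdd_ofAdd, hv]
    simp [ha]

/-- Let `n ≥ 3` and let `H` be a group with a finite-index normal subgroup
`A` isomorphic to `ℤⁿ`.  Then there is a constant `C > 0` such that for every finite-index
subgroup `𝒩` of `A`, the number of normal subgroups `N` of `H` with `N ∩ A = 𝒩` is at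
most `C`. -/
theorem stmt12 {H : Type*} [Group H] (n : ℕ) (hn : 3 ≤ n)
    (A : Subgroup H) (hAnorm : A.Normal) (hAfin : A.FiniteIndex)
    (hAiso : Nonempty (A ≃* Multiplicative (Fin n → ℤ))) :
    ∃ C : ℕ, 0 < C ∧ ∀ M : Subgroup H, M ≤ A → (M.subgroupOf A).FiniteIndex →
      {N : Subgroup H | N.Normal ∧ N ⊓ A = M}.ncard ≤ C := by
  classical
  obtain ⟨e⟩ := hAiso
  have hcomm : ∀ a b : H, a ∈ A → b ∈ A → a * b = b * a := by
    intro a b ha hb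
    have : (⟨a, ha⟩ : A) * ⟨b, hb⟩ = ⟨b, hb⟩ * ⟨a, ha⟩ := by
      apply e.injective
      rw [map_mul, map_mul, mul_comm]
    exact congrArg Subtype.val this
  set k := A.index with hk
  have hk0 : k ≠ 0 := hAfin.index_ne_zero
  haveI : Finite (H ⧸ A) := A.finite_quotient_of_finiteIndex
  have hcardQ : Nat.card (H ⧸ A) = k := rfl
  refine ⟨(k ^ n + 1) ^ k, pow_pos (Nat.succ_pos _) _, ?_⟩
  intro M hMA hMfin
  -- the subgroup K of elements of A whose k-th power lies in M
  set K : Subgroup H :=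
    { carrier := {x | x ∈ A ∧ x ^ k ∈ M}
      one_mem' := ⟨A.one_mem, by simpa using M.one_mem⟩
      mul_mem' := by
        rintro x y ⟨hxA, hxk⟩ ⟨hyA, hyk⟩
        refine ⟨A.mul_mem hxA hyA, ?_⟩
        have hc : Commute x y := hcomm x y hxA hyA
        rw [hc.mul_pow]
        exact M.mul_mem hxk hyk
      inv_mem' := by
        rintro x ⟨hxA, hxk⟩
        exact ⟨A.inv_mem hxA, by rw [inv_pow]; exact M.inv_mem hxk⟩ } with hKdef
  have hKA : K ≤ A := fun x hx => hx.1
  obtain ⟨G, hG1, hG2⟩ := aux_G n A K hKA e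
  obtain ⟨hDcard, hDfin⟩ := aux_D n k hk0 M K (fun x hx => hx.2) G hG1 hG2
  set D : Set (Set H) := (fun c => c • (M : Set H)) '' (K : Set H) with hD
  haveI : Finite ↥D := hDfin.to_subtype
  set P : H ⧸ A → H → Prop := fun q h =>
    ((h : H ⧸ A) = q ∧ h ^ k ∈ M ∧ ∀ a ∈ A, h * a * h⁻¹ * a⁻¹ ∈ M) with hP
  obtain ⟨w, hw⟩ : ∃ w : H ⧸ A → H, ∀ q, (∃ h, P q h) → P q (w q) :=
    ⟨fun q => if hq : ∃ h, P q h then hq.choose else 1,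
     fun q hq => by simp only [dif_pos hq]; exact hq.choose_spec⟩
  have hPmem : ∀ (N : Subgroup H) (q : H ⧸ A) (x : H), N.Normal → N ⊓ A = M →
      x ∈ N → (x : H ⧸ A) = q → P q x := by
    intro N q x hNnorm hNA hxN hxq
    refine ⟨hxq, ?_, ?_⟩
    · have h1 : ((x ^ k : H) : H ⧸ A) = 1 := by
        rw [QuotientGroup.mk_pow, ← hcardQ]
        exact pow_card_eq_one'
      have hxA : x ^ k ∈ A := (QuotientGroup.eq_one_iff _).mp h1
      have hmem : x ^ k ∈ N ⊓ A := ⟨N.pow_mem hxN k, hxA⟩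
      rwa [hNA] at hmem
    · intro a haA
      have h1 : x * a * x⁻¹ * a⁻¹ ∈ A :=
        A.mul_mem (hAnorm.conj_mem a haA x) (A.inv_mem haA)
      have h2 : x * a * x⁻¹ * a⁻¹ ∈ N := by
        have hconj : a * x⁻¹ * a⁻¹ ∈ N := hNnorm.conj_mem x⁻¹ (N.inv_mem hxN) a
        have := N.mul_mem hxN hconj
        simpa [mul_assoc] using this
      have hmem : x * a * x⁻¹ * a⁻¹ ∈ N ⊓ A := ⟨h2, h1⟩
      rwa [hNA] at hmem
  have hdiff : ∀ (q : H ⧸ A) (x : H), P q x → P q (w q) → (w q)⁻¹ * x ∈ K := by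
    intro q x hPx hPw
    have hqq : ((w q : H) : H ⧸ A) = ((x : H) : H ⧸ A) := by rw [hPw.1, hPx.1]
    have hA1 : (w q)⁻¹ * x ∈ A := QuotientGroup.eq.mp hqq
    obtain ⟨m, hm, heq⟩ := aux_pow A M hAnorm hMA hcomm hA1 hPw.2.2 k
    have hxe : w q * ((w q)⁻¹ * x) = x := by group
    rw [hxe] at heq
    refine ⟨hA1, ?_⟩
    have hsolve : ((w q)⁻¹ * x) ^ k = (w q ^ k)⁻¹ * x ^ k * m⁻¹ := by
      rw [heq]; group
    rw [hsolve]
    exact M.mul_mem (M.mul_mem (M.inv_mem hPw.2.1) hPx.2.1) (M.inv_mem hm)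
  have hDmem : ∀ (N : Subgroup H) (q : H ⧸ A) (x : H), N.Normal → N ⊓ A = M →
      x ∈ N → (x : H ⧸ A) = q → ((w q)⁻¹ * x) • (M : Set H) ∈ D := by
    intro N q x hNn hNA hxN hxq
    have hPx := hPmem N q x hNn hNA hxN hxq
    exact ⟨_, hdiff q x hPx (hw q ⟨x, hPx⟩), rfl⟩
  set Ψ : Subgroup H → (H ⧸ A → Option ↥D) := fun N q =>
    if hex : N.Normal ∧ N ⊓ A = M ∧ ∃ x, x ∈ N ∧ (x : H ⧸ A) = q then
      some ⟨((w q)⁻¹ * hex.2.2.choose) • (M : Set H),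
        hDmem N q hex.2.2.choose hex.1 hex.2.1 hex.2.2.choose_spec.1 hex.2.2.choose_spec.2⟩
    else none with hΨ
  have hsub : ∀ N N' : Subgroup H, N.Normal → N ⊓ A = M → N'.Normal → N' ⊓ A = M →
      Ψ N = Ψ N' → N ≤ N' := by
    intro N N' hNn hNA hN'n hN'A hpsi x hxN
    have heqq := congrFun hpsi ((x : H ⧸ A))
    have hex : N.Normal ∧ N ⊓ A = M ∧ ∃ y, y ∈ N ∧ (y : H ⧸ A) = (x : H ⧸ A) :=
      ⟨hNn, hNA, x, hxN, rfl⟩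
    by_cases hex' : N'.Normal ∧ N' ⊓ A = M ∧ ∃ y, y ∈ N' ∧ (y : H ⧸ A) = (x : H ⧸ A)
    · simp only [hΨ, dif_pos hex, dif_pos hex', Option.some.injEq, Subtype.mk.injEq] at heqq
      set q : H ⧸ A := (x : H ⧸ A)
      set x₀ := hex.2.2.choose with hx₀def
      obtain ⟨hx₀N, hx₀q⟩ := hex.2.2.choose_spec
      set x₀' := hex'.2.2.choose with hx₀'def
      obtain ⟨hx₀'N, hx₀'q⟩ := hex'.2.2.choose_spec
      rw [leftCoset_eq_iff] at heqq
      have hM1 : x₀⁻¹ * x₀' ∈ M := by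
        have : ((w q)⁻¹ * x₀)⁻¹ * ((w q)⁻¹ * x₀') = x₀⁻¹ * x₀' := by group
        rwa [this] at heqq
      have hM2 : x₀⁻¹ * x ∈ M := by
        have hAx : x₀⁻¹ * x ∈ A := QuotientGroup.eq.mp (by rw [hx₀q])
        have hmem : x₀⁻¹ * x ∈ N ⊓ A := ⟨N.mul_mem (N.inv_mem hx₀N) hxN, hAx⟩
        rwa [hNA] at hmem
      have hMN' : M ≤ N' := by
        rw [← hN'A]; exact inf_le_left
      have hxw : x = x₀' * ((x₀⁻¹ * x₀')⁻¹ * (x₀⁻¹ * x)) := by group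
      rw [hxw]
      exact N'.mul_mem hx₀'N (N'.mul_mem (hMN' (M.inv_mem hM1)) (hMN' hM2))
    · simp only [hΨ, dif_pos hex, dif_neg hex'] at heqq
      exact (Option.some_ne_none _ heqq).elim
  set S : Set (Subgroup H) := {N : Subgroup H | N.Normal ∧ N ⊓ A = M} with hS
  have hinj : Function.Injective (fun N : ↥S => Ψ (N : Subgroup H)) := by
    intro N N' h
    exact Subtype.ext (le_antisymm
      (hsub _ _ N.2.1 N.2.2 N'.2.1 N'.2.2 h)
      (hsub _ _ N'.2.1 N'.2.2 N.2.1 N.2.2 h.symm))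
  haveI : Finite (Option ↥D) := Finite.of_equiv (↥D ⊕ PUnit.{1}) (Equiv.optionEquivSumPUnit ↥D).symm
  haveI : Finite (H ⧸ A → Option ↥D) := inferInstance
  calc S.ncard = Nat.card ↥S := (Nat.card_coe_set_eq S).symm
    _ ≤ Nat.card (H ⧸ A → Option ↥D) := Nat.card_le_card_of_injective _ hinj
    _ = Nat.card (Option ↥D) ^ Nat.card (H ⧸ A) := Nat.card_fun
    _ = (Nat.card ↥D + 1) ^ k := by rw [Finite.card_option, hcardQ]
    _ ≤ (k ^ n + 1) ^ k := Nat.pow_le_pow_left (Nat.add_le_add_right hDcard 1) k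
end

section
/- Let n ≥ 3 and let H be a group generated by 2 elements with a normal subgroup A of finite index such that A is isomorphic to ℤⁿ. Then there exists an element h ∈ H whose conjugation action on A (an automorphism of A ≅ ℤⁿ) is neither the identity nor the inversion map x ↦ −x. -/
lemma lemZ {n : ℕ} (hn : 3 ≤ n) (m : ℤ) (hm : m ≠ 0) (u w : Fin n → ℤ)
    (hz : ∀ z : Fin n → ℤ, m • z ∈ AddSubgroup.closure ({u, w} : Set (Fin n → ℤ))) : False := by
  have h3 : (3 : ℕ) ≤ n := hn
  set i0 : Fin n := ⟨0, by omega⟩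
  set i1 : Fin n := ⟨1, by omega⟩
  set i2 : Fin n := ⟨2, by omega⟩
  have hne01 : i0 ≠ i1 := by simp [i0, i1, Fin.ext_iff]
  have hne10 : i1 ≠ i0 := by simp [i0, i1, Fin.ext_iff]
  have hne20 : i2 ≠ i0 := by simp [i0, i2, Fin.ext_iff]
  have hne21 : i2 ≠ i1 := by simp [i1, i2, Fin.ext_iff]
  have hne12 : i1 ≠ i2 := by simp [i1, i2, Fin.ext_iff]
  have hne02 : i0 ≠ i2 := by simp [i0, i2, Fin.ext_iff]
  -- basis vectors
  let ev : Fin 3 → (Fin n → ℤ) := fun j => Pi.single (if j = 0 then i0 else if j = 1 then i1 else i2) 1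
  obtain ⟨c0, d0, h0⟩ := AddSubgroup.mem_closure_pair.mp (hz (Pi.single i0 1))
  obtain ⟨c1, d1, h1⟩ := AddSubgroup.mem_closure_pair.mp (hz (Pi.single i1 1))
  obtain ⟨c2, d2, h2⟩ := AddSubgroup.mem_closure_pair.mp (hz (Pi.single i2 1))
  -- scalar versions: apply at coordinates
  have e0 := fun j => congrFun h0 j
  have e1 := fun j => congrFun h1 j
  have e2 := fun j => congrFun h2 j
  simp only [Pi.add_apply, Pi.smul_apply, smul_eq_mul] at e0 e1 e2
  have h00 := e0 i0; have h01 := e0 i1; have h02 := e0 i2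
  have h10 := e1 i0; have h11 := e1 i1; have h12 := e1 i2
  have h20 := e2 i0; have h21 := e2 i1; have h22 := e2 i2
  simp only [Pi.single_eq_same, Pi.single_eq_of_ne hne01, Pi.single_eq_of_ne hne02,
    Pi.single_eq_of_ne hne10, Pi.single_eq_of_ne hne12, Pi.single_eq_of_ne hne20,
    Pi.single_eq_of_ne hne21, mul_one, mul_zero] at h00 h01 h02 h10 h11 h12 h20 h21 h22
  -- minor λ₂ = 0
  have hl2 : m * (c0 * d1 - c1 * d0) = 0 := by
    linear_combination (-(c1 * d2 - c2 * d1)) * h02 + (-(c2 * d0 - c0 * d2)) * h12 + (-(c0 * d1 - c1 * d0)) * h22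
  have hl2' : c0 * d1 - c1 * d0 = 0 := by
    rcases mul_eq_zero.mp hl2 with h | h
    · exact absurd h hm
    · exact h
  rcases eq_or_ne c0 0 with hc0 | hc0
  · rcases eq_or_ne d0 0 with hd0 | hd0
    · apply hm
      linear_combination -h00 + u i0 * hc0 + w i0 * hd0
    · -- d0 ≠ 0 : d0 * m = 0
      have : d0 * m = 0 := by linear_combination d1 * h01 - d0 * h11 - u i1 * hl2'
      rcases mul_eq_zero.mp this with h | h
      · exact hd0 h
      · exact hm h
  · have : c0 * m = 0 := by linear_combination c1 * h01 - c0 * h11 + w i1 * hl2'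
    rcases mul_eq_zero.mp this with h | h
    · exact hc0 h
    · exact hm h

/-- Let `n ≥ 3` and let `H` be a `2`-generated group with a finite-index
normal subgroup `A` isomorphic to `ℤⁿ`.  Then there is an `h ∈ H` whose conjugation action
on `A` is neither the identity nor the inversion map `x ↦ x⁻¹` (i.e. `x ↦ −x` in additive
notation for `A ≅ ℤⁿ`). -/
theorem stmt13 {H : Type*} [Group H] (n : ℕ) (hn : 3 ≤ n)
    (hgen2 : ∃ a b : H, Subgroup.closure {a, b} = ⊤)
    (A : Subgroup H) (hAnorm : A.Normal) (hAfin : A.FiniteIndex)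
    (hAiso : Nonempty (A ≃* Multiplicative (Fin n → ℤ))) :
    ∃ h : H, ¬ (∀ a ∈ A, h * a * h⁻¹ = a) ∧ ¬ (∀ a ∈ A, h * a * h⁻¹ = a⁻¹) := by
  obtain ⟨g₁, g₂, hgen⟩ := hgen2
  obtain ⟨e⟩ := hAiso
  by_contra hcon
  push_neg at hcon
  -- the subgroup of elements acting trivially on A
  set K : Subgroup H := {
    carrier := {h : H | ∀ a ∈ A, h * a * h⁻¹ = a}
    one_mem' := by intro a ha; simp
    mul_mem' := by
      intro x y hx hy a ha
      have h1 : x * y * a * (x * y)⁻¹ = x * (y * a * y⁻¹) * x⁻¹ := by group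
      rw [h1, hy a ha, hx a ha]
    inv_mem' := by
      intro x hx a ha
      simp only [inv_inv]
      calc x⁻¹ * a * x = x⁻¹ * (x * a * x⁻¹) * x := by rw [hx a ha]
        _ = a := by group } with hKset
  have hKdef : ∀ h : H, h ∈ K ↔ ∀ a ∈ A, h * a * h⁻¹ = a := fun _ => Iff.rfl
  have hKinv : ∀ h : H, h ∉ K → ∀ a ∈ A, h * a * h⁻¹ = a⁻¹ := by
    intro h hh
    apply hcon h
    rw [hKdef] at hh
    push_neg at hh
    exact hh
  -- A is contained in K
  have hAK : A ≤ K := by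
    intro x hx
    rw [hKdef]
    intro a ha
    have hc : (⟨x, hx⟩ * ⟨a, ha⟩ : A) = ⟨a, ha⟩ * ⟨x, hx⟩ :=
      e.injective (by rw [map_mul, map_mul, mul_comm])
    have hcomm : x * a = a * x := congrArg (fun t : A => (t : H)) hc
    rw [hcomm]; group
  -- product of two elements outside K lies in K
  have hprod : ∀ x : H, x ∉ K → ∀ y : H, y ∉ K → x * y ∈ K := by
    intro x hx y hy
    rw [hKdef]
    intro a ha
    have h1 : x * y * a * (x * y)⁻¹ = x * (y * a * y⁻¹) * x⁻¹ := by group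
    rw [h1, hKinv y hy a ha, hKinv x hx a⁻¹ (inv_mem ha), inv_inv]
  -- K is closed under conjugation
  have hKconj : ∀ t : H, ∀ k : H, k ∈ K → t * k * t⁻¹ ∈ K := by
    intro t k hk
    rw [hKdef]
    intro a ha
    have ha' : t⁻¹ * a * t ∈ A := by
      have := hAnorm.conj_mem a ha t⁻¹
      simpa using this
    have h1 : t * k * t⁻¹ * a * (t * k * t⁻¹)⁻¹ = t * (k * (t⁻¹ * a * t) * k⁻¹) * t⁻¹ := by group
    rw [h1, (hKdef k).mp hk _ ha']
    group
  -- the transfer homomorphism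
  haveI : (A.subgroupOf K).FiniteIndex := inferInstance
  let ϕ : (A.subgroupOf K) →* Multiplicative (Fin n → ℤ) :=
    e.toMonoidHom.comp (Subgroup.subgroupOfEquivOfLe hAK).toMonoidHom
  let τ : K →* Multiplicative (Fin n → ℤ) := MonoidHom.transfer ϕ
  set m : ℕ := (A.subgroupOf K).index with hmdef
  have hm0 : (m : ℤ) ≠ 0 := by
    exact_mod_cast Subgroup.FiniteIndex.index_ne_zero
  -- total function version
  classical
  set F : H → (Fin n → ℤ) := fun h =>
    if hh : h ∈ K then Multiplicative.toAdd (τ ⟨h, hh⟩) else 0 with hFdef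
  have hFval : ∀ (x : H) (hx : x ∈ K), F x = Multiplicative.toAdd (τ ⟨x, hx⟩) := by
    intro x hx; rw [hFdef]; simp [dif_pos hx]
  have hF1 : F 1 = 0 := by
    rw [hFval 1 (one_mem K)]
    have : (⟨1, one_mem K⟩ : K) = 1 := rfl
    rw [this, map_one]; rfl
  have hFmul : ∀ (x y : H), x ∈ K → y ∈ K → F (x * y) = F x + F y := by
    intro x y hx hy
    rw [hFval x hx, hFval y hy, hFval (x*y) (mul_mem hx hy)]
    have : (⟨x * y, mul_mem hx hy⟩ : K) = ⟨x, hx⟩ * ⟨y, hy⟩ := rfl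
    rw [this, map_mul]; rfl
  have hFinv : ∀ (x : H), x ∈ K → F x⁻¹ = - F x := by
    intro x hx
    have h2 : F x + F x⁻¹ = 0 := by
      rw [← hFmul x x⁻¹ hx (inv_mem hx), mul_inv_cancel, hF1]
    exact (neg_eq_of_add_eq_zero_right h2).symm
  have hFconj : ∀ (c x : H), c ∈ K → x ∈ K → F (c * x * c⁻¹) = F x := by
    intro c x hc hx
    rw [hFmul _ _ (mul_mem hc hx) (inv_mem hc), hFmul _ _ hc hx, hFinv c hc]
    abel
  -- evaluation of F on A
  set zmap : (Fin n → ℤ) → H := fun z => ((e.symm (Multiplicative.ofAdd z)) : A) with hzmapdef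
  have hzmapA : ∀ z, zmap z ∈ A := fun z => (e.symm (Multiplicative.ofAdd z)).2
  have hFA : ∀ z : Fin n → ℤ, F (zmap z) = m • z := by
    intro z
    have hxA : zmap z ∈ A := hzmapA z
    have hxK : zmap z ∈ K := hAK hxA
    set g : K := ⟨zmap z, hxK⟩ with hg
    have key : ∀ (k : ℕ) (g₀ : K), g₀⁻¹ * g ^ k * g₀ ∈ A.subgroupOf K →
        g₀⁻¹ * g ^ k * g₀ = g ^ k := by
      intro k g₀ _
      apply Subtype.ext
      have h2 : (g₀ : H)⁻¹ * (zmap z) ^ k * ((g₀ : H)⁻¹)⁻¹ = (zmap z) ^ k :=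
        (hKdef ((g₀ : H)⁻¹)).mp (inv_mem g₀.2) ((zmap z) ^ k) (pow_mem hxA k)
      rw [inv_inv] at h2
      simpa [hg] using h2
    have htr := MonoidHom.transfer_eq_pow ϕ g key
    rw [hFval _ hxK, ← hg]
    show Multiplicative.toAdd (MonoidHom.transfer ϕ g) = m • z
    rw [htr]
    have hgA : g ∈ A.subgroupOf K := by rwa [Subgroup.mem_subgroupOf]
    have hpow : (⟨g ^ (A.subgroupOf K).index, MonoidHom.transfer_eq_pow_aux g key⟩ :
        A.subgroupOf K) = (⟨g, hgA⟩ : A.subgroupOf K) ^ (A.subgroupOf K).index := by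
      apply Subtype.ext; simp
    rw [hpow, map_pow]
    have hϕ : ϕ ⟨g, hgA⟩ = Multiplicative.ofAdd z := by
      show e ((Subgroup.subgroupOfEquivOfLe hAK) ⟨g, hgA⟩) = Multiplicative.ofAdd z
      have h3 : (Subgroup.subgroupOfEquivOfLe hAK) ⟨g, hgA⟩ = ⟨zmap z, hxA⟩ := rfl
      have h4 : (⟨zmap z, hxA⟩ : A) = e.symm (Multiplicative.ofAdd z) := Subtype.ext rfl
      rw [h3, h4, MulEquiv.apply_symm_apply]
    rw [hϕ, ← hmdef, toAdd_pow, toAdd_ofAdd]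
  -- case split on whether K is everything
  by_cases hKtop : ∀ h : H, h ∈ K
  case pos =>
    set U := AddSubgroup.closure ({F g₁, F g₂} : Set (Fin n → ℤ)) with hU
    set T : Subgroup H := {
      carrier := {h : H | F h ∈ U}
      one_mem' := by simp only [Set.mem_setOf_eq, hF1]; exact zero_mem U
      mul_mem' := by
        intro x y hx hy
        simp only [Set.mem_setOf_eq] at *
        rw [hFmul x y (hKtop x) (hKtop y)]
        exact add_mem hx hy
      inv_mem' := by
        intro x hx
        simp only [Set.mem_setOf_eq] at *
        rw [hFinv x (hKtop x)]
        exact neg_mem hx } with hT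
    have hTall : ∀ h : H, h ∈ T := by
      intro h
      have hle : Subgroup.closure ({g₁, g₂} : Set H) ≤ T := by
        rw [Subgroup.closure_le]
        intro x hx
        simp only [Set.mem_insert_iff, Set.mem_singleton_iff] at hx
        rcases hx with rfl | rfl
        · exact AddSubgroup.subset_closure (Set.mem_insert _ _)
        · exact AddSubgroup.subset_closure (Set.mem_insert_of_mem _ rfl)
      exact hle (hgen ▸ Subgroup.mem_top h)
    apply lemZ hn (m : ℤ) hm0 (F g₁) (F g₂)
    intro z
    have h5 : ((m : ℤ)) • z = F (zmap z) := by rw [hFA z, natCast_zsmul]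
    rw [h5]
    exact hTall (zmap z)
  case neg =>
    push_neg at hKtop
    obtain ⟨b₀, hb₀⟩ := hKtop
    have hb₀inv : b₀⁻¹ ∉ K := fun h => hb₀ (by simpa using inv_mem h)
    have hb2 : b₀ * b₀ ∈ K := hprod b₀ hb₀ b₀ hb₀
    set E : H → (Fin n → ℤ) := fun h => F h - F (b₀ * h * b₀⁻¹) with hE
    have hE1 : E 1 = 0 := by
      simp only [hE]
      have h1 : b₀ * 1 * b₀⁻¹ = (1:H) := by group
      rw [h1, hF1]; simp
    have hEmul : ∀ x y : H, x ∈ K → y ∈ K → E (x * y) = E x + E y := by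
      intro x y hx hy
      have h1 : b₀ * (x * y) * b₀⁻¹ = (b₀ * x * b₀⁻¹) * (b₀ * y * b₀⁻¹) := by group
      simp only [hE]
      rw [h1, hFmul x y hx hy, hFmul _ _ (hKconj b₀ x hx) (hKconj b₀ y hy)]
      abel
    have hEinv : ∀ x : H, x ∈ K → E x⁻¹ = - E x := by
      intro x hx
      simp only [hE]
      have h1 : b₀ * x⁻¹ * b₀⁻¹ = (b₀ * x * b₀⁻¹)⁻¹ := by group
      rw [h1, hFinv x hx, hFinv _ (hKconj b₀ x hx)]
      abel
    have hEconj : ∀ x : H, x ∈ K → E (b₀ * x * b₀⁻¹) = - E x := by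
      intro x hx
      simp only [hE]
      have h1 : b₀ * (b₀ * x * b₀⁻¹) * b₀⁻¹ = (b₀*b₀) * x * (b₀*b₀)⁻¹ := by group
      rw [h1, hFconj _ x hb2 hx]
      abel
    have hEconj' : ∀ x : H, x ∈ K → E (b₀⁻¹ * x * b₀) = - E x := by
      intro x hx
      simp only [hE]
      have h1 : b₀ * (b₀⁻¹ * x * b₀) * b₀⁻¹ = x := by group
      have h2 : b₀⁻¹ * x * b₀ = (b₀*b₀)⁻¹ * (b₀ * x * b₀⁻¹) * ((b₀*b₀)⁻¹)⁻¹ := by group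
      rw [h1, h2, hFconj _ _ (inv_mem hb2) (hKconj b₀ x hx)]
      abel
    have hEb2 : E (b₀ * b₀) = 0 := by
      simp only [hE]
      have h1 : b₀ * (b₀ * b₀) * b₀⁻¹ = b₀ * b₀ := by group
      rw [h1]; simp
    have hEA : ∀ z : Fin n → ℤ, E (zmap z) = (2 * (m:ℤ)) • z := by
      intro z
      simp only [hE]
      have h1 : b₀ * zmap z * b₀⁻¹ = (zmap z)⁻¹ := hKinv b₀ hb₀ _ (hzmapA z)
      rw [h1, hFinv _ (hAK (hzmapA z)), hFA z, sub_neg_eq_add, ← natCast_zsmul z m,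
        ← add_zsmul]
      congr 1
      ring
    have main : ∀ u₁ u₂ w : Fin n → ℤ,
        (∀ g ∈ ({g₁, g₂} : Set H), (g ∈ K ∧ E g ∈ AddSubgroup.closure {u₁, u₂}) ∨
          (g ∉ K ∧ E (b₀⁻¹ * g) - w ∈ AddSubgroup.closure {u₁, u₂})) → False := by
      intro u₁ u₂ w hgens
      set U := AddSubgroup.closure ({u₁, u₂} : Set (Fin n → ℤ)) with hUdef
      set T : Subgroup H := {
        carrier := {h : H | (h ∈ K ∧ E h ∈ U) ∨ (h ∉ K ∧ E (b₀⁻¹ * h) - w ∈ U)}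
        one_mem' := Or.inl ⟨one_mem K, by rw [hE1]; exact zero_mem U⟩
        mul_mem' := by
          rintro x y (⟨hxK, hxU⟩ | ⟨hxK, hxU⟩) (⟨hyK, hyU⟩ | ⟨hyK, hyU⟩)
          · exact Or.inl ⟨mul_mem hxK hyK, by
              rw [hEmul x y hxK hyK]; exact add_mem hxU hyU⟩
          · -- x ∈ K, y ∉ K
            refine Or.inr ⟨fun hxy => hyK ?_, ?_⟩
            · have h1 : y = x⁻¹ * (x * y) := by group
              rw [h1]; exact mul_mem (inv_mem hxK) hxy
            · have hxc : b₀⁻¹ * x * b₀ ∈ K := by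
                have := hKconj b₀⁻¹ x hxK; simpa using this
              have hyc : b₀⁻¹ * y ∈ K := hprod b₀⁻¹ hb₀inv y hyK
              have h1 : b₀⁻¹ * (x * y) = (b₀⁻¹ * x * b₀) * (b₀⁻¹ * y) := by group
              rw [h1, hEmul _ _ hxc hyc, hEconj' x hxK]
              have h2 : -E x + E (b₀⁻¹ * y) - w = (E (b₀⁻¹ * y) - w) + (- E x) := by abel
              rw [h2]
              exact add_mem hyU (neg_mem hxU)
          · -- x ∉ K, y ∈ K
            refine Or.inr ⟨fun hxy => hxK ?_, ?_⟩
            · have h1 : x = (x * y) * y⁻¹ := by group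
              rw [h1]; exact mul_mem hxy (inv_mem hyK)
            · have hxc : b₀⁻¹ * x ∈ K := hprod b₀⁻¹ hb₀inv x hxK
              have h1 : b₀⁻¹ * (x * y) = (b₀⁻¹ * x) * y := by group
              rw [h1, hEmul _ _ hxc hyK]
              have h2 : E (b₀⁻¹ * x) + E y - w = (E (b₀⁻¹ * x) - w) + E y := by abel
              rw [h2]
              exact add_mem hxU hyU
          · -- x ∉ K, y ∉ K
            refine Or.inl ⟨hprod x hxK y hyK, ?_⟩
            have hk1 : b₀⁻¹ * x ∈ K := hprod b₀⁻¹ hb₀inv x hxK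
            have hk2 : b₀⁻¹ * y ∈ K := hprod b₀⁻¹ hb₀inv y hyK
            have h1 : x * y = (b₀ * (b₀⁻¹ * x) * b₀⁻¹) * ((b₀ * b₀) * (b₀⁻¹ * y)) := by group
            rw [h1, hEmul _ _ (hKconj b₀ _ hk1) (mul_mem hb2 hk2),
              hEmul _ _ hb2 hk2, hEconj _ hk1, hEb2]
            have h2 : -E (b₀⁻¹ * x) + (0 + E (b₀⁻¹ * y)) =
                (E (b₀⁻¹ * y) - w) - (E (b₀⁻¹ * x) - w) := by abel
            rw [h2]
            exact sub_mem hyU hxU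
        inv_mem' := by
          rintro x (⟨hxK, hxU⟩ | ⟨hxK, hxU⟩)
          · exact Or.inl ⟨inv_mem hxK, by rw [hEinv x hxK]; exact neg_mem hxU⟩
          · refine Or.inr ⟨fun hxy => hxK (by simpa using inv_mem hxy), ?_⟩
            have hk : b₀⁻¹ * x ∈ K := hprod b₀⁻¹ hb₀inv x hxK
            have h1 : b₀⁻¹ * x⁻¹ = (b₀⁻¹ * (b₀⁻¹ * x)⁻¹ * b₀) * (b₀ * b₀)⁻¹ := by group
            have hc : b₀⁻¹ * (b₀⁻¹ * x)⁻¹ * b₀ ∈ K := by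
              have := hKconj b₀⁻¹ _ (inv_mem hk); simpa using this
            rw [h1, hEmul _ _ hc (inv_mem hb2), hEconj' _ (inv_mem hk), hEinv _ hk,
              hEinv _ hb2, hEb2]
            have h2 : - -E (b₀⁻¹ * x) + -0 - w = E (b₀⁻¹ * x) - w := by abel
            rw [h2]
            exact hxU } with hT
      have hTmem : ∀ h : H, h ∈ T ↔
          ((h ∈ K ∧ E h ∈ U) ∨ (h ∉ K ∧ E (b₀⁻¹ * h) - w ∈ U)) := fun _ => Iff.rfl
      have hTall : ∀ h : H, h ∈ T := by
        intro h
        have hle : Subgroup.closure ({g₁, g₂} : Set H) ≤ T := by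
          rw [Subgroup.closure_le]
          intro x hx
          rw [SetLike.mem_coe, hTmem]
          exact hgens x hx
        exact hle (hgen ▸ Subgroup.mem_top h)
      apply lemZ hn (2 * (m:ℤ)) (mul_ne_zero two_ne_zero hm0) u₁ u₂
      intro z
      rcases (hTmem (zmap z)).mp (hTall (zmap z)) with ⟨_, hzU⟩ | ⟨hnot, _⟩
      · rw [← hEA z]; exact hzU
      · exact absurd (hAK (hzmapA z)) hnot
    by_cases h1K : g₁ ∈ K <;> by_cases h2K : g₂ ∈ K
    · -- both generators act trivially: everything is in K, contradiction
      apply hb₀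
      have hle : Subgroup.closure ({g₁, g₂} : Set H) ≤ K := by
        rw [Subgroup.closure_le]
        intro x hx
        simp only [Set.mem_insert_iff, Set.mem_singleton_iff] at hx
        rcases hx with rfl | rfl <;> assumption
      exact hle (hgen ▸ Subgroup.mem_top b₀)
    · apply main (E g₁) 0 (E (b₀⁻¹ * g₂))
      intro g hg
      simp only [Set.mem_insert_iff, Set.mem_singleton_iff] at hg
      rcases hg with rfl | rfl
      · exact Or.inl ⟨h1K, AddSubgroup.subset_closure (Set.mem_insert _ _)⟩
      · exact Or.inr ⟨h2K, by rw [sub_self]; exact zero_mem _⟩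
    · apply main (E g₂) 0 (E (b₀⁻¹ * g₁))
      intro g hg
      simp only [Set.mem_insert_iff, Set.mem_singleton_iff] at hg
      rcases hg with rfl | rfl
      · exact Or.inr ⟨h1K, by rw [sub_self]; exact zero_mem _⟩
      · exact Or.inl ⟨h2K, AddSubgroup.subset_closure (Set.mem_insert _ _)⟩
    · apply main (E (b₀⁻¹ * g₁) - E (b₀⁻¹ * g₂)) 0 (E (b₀⁻¹ * g₁))
      intro g hg
      simp only [Set.mem_insert_iff, Set.mem_singleton_iff] at hg
      rcases hg with rfl | rfl
      · exact Or.inr ⟨h1K, by rw [sub_self]; exact zero_mem _⟩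
      · refine Or.inr ⟨h2K, ?_⟩
        have h2 : E (b₀⁻¹ * g) - E (b₀⁻¹ * g₁) =
            -(E (b₀⁻¹ * g₁) - E (b₀⁻¹ * g)) := by abel
        rw [h2]
        exact neg_mem (AddSubgroup.subset_closure (Set.mem_insert _ _))
end
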